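/- Let A = [[a,b],[c,d]] ∈ ℝ^{2×2} satisfy det A = ad − bc = 0 and a, d > max{0, b, c}, and set ρ₁ = (d−c)/(a−b) > 0 and ρ₂ = (d−b)/(a−c) > 0. Let x₁ᵏ, x₂ᵏ ∈ Δ₂ for k = 0, 1, 2, … be arbitrary, and define y₁ᵗ = Σ_{k=0}^{t−1} A x₂ᵏ ∈ ℝ² and y₂ᵗ = −Σ_{k=0}^{t−1} Aᵀ x₁ᵏ ∈ ℝ². Then for every t ≥ 1, the coordinates satisfy y₁ᵗ₂ = −ρ₁·y₁ᵗ₁ and y₂ᵗ₂ = −ρ₂·y₂ᵗ₁ (i.e., all dual payoff vectors lie in a fixed two-dimensional subspace of ℝ⁴). -/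

import Mathlib

open Matrix

/-- under `det A = 0` and `a, d > max{0, b, c}`, the cumulative dual
payoff vectors `y₁ᵗ = Σ_{k<t} A x₂ᵏ` and `y₂ᵗ = −Σ_{k<t} Aᵀ x₁ᵏ` satisfy
`y₁ᵗ₂ = −ρ₁·y₁ᵗ₁` and `y₂ᵗ₂ = −ρ₂·y₂ᵗ₁` for all `t ≥ 1`, where
`ρ₁ = (d−c)/(a−b)` and `ρ₂ = (d−b)/(a−c)`. -/
theorem dual_iterates_in_subspace
    (a b c d : ℝ)
    (hdet : a * d - b * c = 0)
    (ha : a > max 0 (max b c)) (hd : d > max 0 (max b c))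
    (ρ₁ ρ₂ : ℝ)
    (hρ₁ : ρ₁ = (d - c) / (a - b)) (hρ₂ : ρ₂ = (d - b) / (a - c))
    (x₁ x₂ : ℕ → Fin 2 → ℝ)
    (hx₁ : ∀ k, x₁ k ∈ stdSimplex ℝ (Fin 2))
    (hx₂ : ∀ k, x₂ k ∈ stdSimplex ℝ (Fin 2))
    (y₁ y₂ : ℕ → Fin 2 → ℝ)
    (hy₁ : ∀ t, y₁ t = ∑ k ∈ Finset.range t, (!![a, b; c, d]).mulVec (x₂ k))
    (hy₂ : ∀ t, y₂ t = -∑ k ∈ Finset.range t, (!![a, b; c, d])ᵀ.mulVec (x₁ k)) :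
    ∀ t : ℕ, 1 ≤ t → y₁ t 1 = -ρ₁ * y₁ t 0 ∧ y₂ t 1 = -ρ₂ * y₂ t 0 := by
  have hb : b < a := lt_of_le_of_lt ((le_max_left b c).trans (le_max_right 0 _)) ha
  have hc : c < a := lt_of_le_of_lt ((le_max_right b c).trans (le_max_right 0 _)) ha
  have hab : a - b ≠ 0 := by linarith
  have hac : a - c ≠ 0 := by linarith
  intro t _
  refine ⟨?_, ?_⟩
  · rw [hy₁ t, hρ₁, Finset.sum_apply, Finset.sum_apply, Finset.mul_sum]
    refine Finset.sum_congr rfl fun k _ => ?_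
    simp only [mulVec, dotProduct, Fin.sum_univ_two, Matrix.cons_val', Matrix.cons_val_zero,
      Matrix.cons_val_one, Matrix.head_cons, Matrix.empty_val', Matrix.cons_val_fin_one,
      Matrix.head_fin_const, Matrix.of_apply]
    field_simp
    linear_combination (x₂ k 0 + x₂ k 1) * hdet
  · rw [hy₂ t, hρ₂]
    simp only [Pi.neg_apply, Finset.sum_apply]
    have key : ∑ k ∈ Finset.range t, ((!![a, b; c, d])ᵀ.mulVec (x₁ k)) 1
        = -((d - b) / (a - c)) * ∑ k ∈ Finset.range t, ((!![a, b; c, d])ᵀ.mulVec (x₁ k)) 0 := by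
      rw [Finset.mul_sum]
      refine Finset.sum_congr rfl fun k _ => ?_
      simp only [Matrix.transpose_apply, mulVec, dotProduct, Fin.sum_univ_two, Matrix.cons_val',
        Matrix.cons_val_zero, Matrix.cons_val_one, Matrix.head_cons, Matrix.empty_val',
        Matrix.cons_val_fin_one, Matrix.head_fin_const, Matrix.transpose, Matrix.of_apply]
      field_simp
      linear_combination (x₁ k 0 + x₁ k 1) * hdet
    rw [key]; ring
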